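/- Let a, b, c ∈ ℝ with a² + b² + c² = 1, a − b − c ≥ −1, b − a − c ≥ −1, and 2c(c+1) ≥ 2ab + 1. Then the 4×4 complex matrix ρ̃ = (1/4)·(1₄ + (1/2)·σ₃⊗1₂ + (1/2)·1₂⊗σ₃ + a·σ₁⊗σ₂ + b·σ₂⊗σ₁ + c·σ₃⊗σ₃) is positive semidefinite (and has trace 1), i.e. it is a two-qubit density matrix. -/

import Mathlib

open Matrix Complex BigOperators Kronecker
open scoped ComplexOrder

/-- The three Pauli matrices σ₁, σ₂, σ₃ (indexed by `Fin 3`). -/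
noncomputable def pauli : Fin 3 → Matrix (Fin 2) (Fin 2) ℂ
  | 0 => !![0, 1; 1, 0]
  | 1 => !![0, -Complex.I; Complex.I, 0]
  | 2 => !![1, 0; 0, -1]

/-- The state `ρ̃ = (1/4)(1₄ + (1/2) σ₃⊗1 + (1/2) 1⊗σ₃ + a σ₁⊗σ₂ + b σ₂⊗σ₁ + c σ₃⊗σ₃)`. -/
noncomputable def rhoTilde (a b c : ℝ) : Matrix (Fin 2 × Fin 2) (Fin 2 × Fin 2) ℂ :=
  (1 / 4 : ℂ) • ((1 : Matrix (Fin 2 × Fin 2) (Fin 2 × Fin 2) ℂ)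
    + (1 / 2 : ℂ) • (pauli 2 ⊗ₖ (1 : Matrix (Fin 2) (Fin 2) ℂ))
    + (1 / 2 : ℂ) • ((1 : Matrix (Fin 2) (Fin 2) ℂ) ⊗ₖ pauli 2)
    + (a : ℂ) • (pauli 0 ⊗ₖ pauli 1)
    + (b : ℂ) • (pauli 1 ⊗ₖ pauli 0)
    + (c : ℂ) • (pauli 2 ⊗ₖ pauli 2))

/-- First 2×2 block positivity. -/
lemma block1_aux (c s p0 q0 p3 q3 : ℝ) (hc : 0 ≤ c) (hs : s ^ 2 ≤ c * (2 + c)) :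
    0 ≤ (2 + c) * (p0 ^ 2 + q0 ^ 2) + c * (p3 ^ 2 + q3 ^ 2) + 2 * s * (p0 * q3 - q0 * p3) := by
  nlinarith [sq_nonneg ((2 + c) * p0 + s * q3), sq_nonneg ((2 + c) * q0 - s * p3),
    mul_nonneg (by nlinarith : (0:ℝ) ≤ c * (2 + c) - s ^ 2)
      (add_nonneg (sq_nonneg p3) (sq_nonneg q3)), hc, sq_nonneg p0, sq_nonneg q0]

/-- Second 2×2 block positivity. -/
lemma block2_aux (e s p1 q1 p2 q2 : ℝ) (hs1 : s ≤ e) (hs2 : -e ≤ s) :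
    0 ≤ e * (p1 ^ 2 + q1 ^ 2 + p2 ^ 2 + q2 ^ 2) - 2 * s * (p1 * q2 - q1 * p2) := by
  nlinarith [mul_nonneg (by linarith : (0:ℝ) ≤ e + s)
      (add_nonneg (sq_nonneg (p1 - q2)) (sq_nonneg (q1 + p2))),
    mul_nonneg (by linarith : (0:ℝ) ≤ e - s)
      (add_nonneg (sq_nonneg (p1 + q2)) (sq_nonneg (q1 - p2)))]

lemma pauli_herm (i : Fin 3) : (pauli i).IsHermitian := by
  fin_cases i <;> ext j k <;> fin_cases j <;> fin_cases k <;>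
    simp [pauli, Matrix.conjTranspose_apply]

lemma kron_herm {A B : Matrix (Fin 2) (Fin 2) ℂ} (hA : A.IsHermitian) (hB : B.IsHermitian) :
    (A ⊗ₖ B).IsHermitian := by
  ext ⟨i, j⟩ ⟨k, l⟩
  show star (A k i * B l j) = A i k * B j l
  rw [star_mul', ← Matrix.conjTranspose_apply, ← Matrix.conjTranspose_apply, hA, hB, mul_comm]

lemma real_smul_herm (r : ℝ) {M : Matrix (Fin 2 × Fin 2) (Fin 2 × Fin 2) ℂ}
    (hM : M.IsHermitian) : ((r : ℂ) • M).IsHermitian := by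
  rw [Matrix.IsHermitian, Matrix.conjTranspose_smul, hM]
  norm_num

set_option maxHeartbeats 1000000 in
/-- Under the stated constraints on `a, b, c`, the matrix `ρ̃` is positive
semidefinite and has trace 1, i.e. it is a two-qubit density matrix. -/
theorem rhoTilde_is_density (a b c : ℝ)
    (hnorm : a ^ 2 + b ^ 2 + c ^ 2 = 1)
    (h1 : a - b - c ≥ -1) (h2 : b - a - c ≥ -1)
    (h3 : 2 * c * (c + 1) ≥ 2 * a * b + 1) :
    (rhoTilde a b c).PosSemidef ∧ (rhoTilde a b c).trace = 1 := by
  -- basic consequences of the hypotheses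
  have hc : 0 ≤ c := by nlinarith [sq_nonneg (a + b), sq_nonneg (c + 1), sq_nonneg a, sq_nonneg b]
  have hs : (a + b) ^ 2 ≤ c * (2 + c) := by nlinarith
  have he1 : a - b ≤ 1 - c := by linarith
  have he2 : -(1 - c) ≤ a - b := by linarith
  constructor
  · rw [Matrix.posSemidef_iff_dotProduct_mulVec]
    constructor
    · -- Hermitian
      have h12 : ((1/2 : ℂ) • (pauli 2 ⊗ₖ (1 : Matrix (Fin 2) (Fin 2) ℂ))) =
          (((1/2 : ℝ) : ℂ) • (pauli 2 ⊗ₖ (1 : Matrix (Fin 2) (Fin 2) ℂ))) := by norm_num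
      have h12' : ((1/2 : ℂ) • ((1 : Matrix (Fin 2) (Fin 2) ℂ) ⊗ₖ pauli 2)) =
          (((1/2 : ℝ) : ℂ) • ((1 : Matrix (Fin 2) (Fin 2) ℂ) ⊗ₖ pauli 2)) := by norm_num
      have h14 : ∀ M : Matrix (Fin 2 × Fin 2) (Fin 2 × Fin 2) ℂ,
          (1/4 : ℂ) • M = ((1/4 : ℝ) : ℂ) • M := by intro M; norm_num
      rw [rhoTilde, h12, h12', h14]
      exact real_smul_herm _ (((((Matrix.isHermitian_one.add
        (real_smul_herm _ (kron_herm (pauli_herm 2) Matrix.isHermitian_one))).add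
        (real_smul_herm _ (kron_herm Matrix.isHermitian_one (pauli_herm 2)))).add
        (real_smul_herm _ (kron_herm (pauli_herm 0) (pauli_herm 1)))).add
        (real_smul_herm _ (kron_herm (pauli_herm 1) (pauli_herm 0)))).add
        (real_smul_herm _ (kron_herm (pauli_herm 2) (pauli_herm 2))))
    · -- positivity of the quadratic form
      intro x
      simp only [rhoTilde, pauli, dotProduct, mulVec, Fintype.sum_prod_type, Fin.sum_univ_two,
        Matrix.add_apply, Matrix.smul_apply, Matrix.kroneckerMap_apply, Matrix.one_apply,
        Pi.star_apply, Matrix.cons_val', Matrix.cons_val_zero, Matrix.cons_val_one,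
        Matrix.head_cons, Matrix.head_fin_const, Matrix.empty_val', Matrix.cons_val_fin_one,
        smul_eq_mul]
      norm_num [Prod.ext_iff]
      ring_nf
      rw [Complex.le_def]
      constructor
      · simp only [Complex.zero_re, Complex.add_re, Complex.mul_re, Complex.mul_im,
          Complex.ofReal_re, Complex.ofReal_im, Complex.I_re, Complex.I_im, Complex.conj_re,
          Complex.conj_im, Complex.neg_re, Complex.neg_im,
          Complex.one_re, Complex.one_im, Complex.re_ofNat, Complex.im_ofNat,
          Complex.div_ofNat_re, Complex.div_ofNat_im]
        have B1 := block1_aux c (a + b) (x (0,0)).re (x (0,0)).im (x (1,1)).re (x (1,1)).im hc hs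
        have B2 := block2_aux (1 - c) (a - b) (x (0,1)).re (x (0,1)).im (x (1,0)).re
          (x (1,0)).im he1 he2
        linarith [B1, B2]
      · simp only [Complex.zero_im, Complex.add_im, Complex.mul_re, Complex.mul_im,
          Complex.ofReal_re, Complex.ofReal_im, Complex.I_re, Complex.I_im, Complex.conj_re,
          Complex.conj_im, Complex.neg_re, Complex.neg_im,
          Complex.one_re, Complex.one_im, Complex.re_ofNat, Complex.im_ofNat,
          Complex.div_ofNat_re, Complex.div_ofNat_im]
        ring
  · -- trace
    simp [Matrix.trace, rhoTilde, pauli, Fintype.sum_prod_type, Fin.sum_univ_two,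
      Matrix.diag, Matrix.one_apply, Matrix.kroneckerMap_apply]
    ring_nf
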